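/- For S ⊆ T with μ(S) = 0 (no cluster entirely contained in S), the lifted generalized subtour elimination inequality x(δ(S)) ≥ 2·y_i, for i ∈ S, is valid for the GMDTSP polytope, and the lifting coefficient is exact: there exists a feasible GMDTSP solution with y_i = 0 and x(δ(S)) = 0, namely a solution visiting no target of S, which exists precisely because every cluster has a representative outside S. -/

import Mathlib

open Finset

/-- A feasible GMDTSP solution: a collection of simple cycles on the complete
target–depot graph (no depot–depot edges), each cycle containing exactly one
depot, visiting at least one target of every cluster.  `x u v` is the number of
times the edge `{u,v}` is used (2 only on degenerate depot–target two-edge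
cycles) and `y t` indicates whether target `t` is visited. -/
structure GMDTSPSol (T D : Type*) [Fintype T] [Fintype D]
    (clusters : Finset (Finset T)) where
  x : (T ⊕ D) → (T ⊕ D) → ℕ
  y : T → ℕ
  symm : ∀ u v, x u v = x v u
  loopless : ∀ u, x u u = 0
  no_depot_depot : ∀ d d' : D, x (Sum.inr d) (Sum.inr d') = 0
  xTT_le_one : ∀ t t' : T, x (Sum.inl t) (Sum.inl t') ≤ 1
  xDT_le_two : ∀ (d : D) (t : T), x (Sum.inr d) (Sum.inl t) ≤ 2
  y_le_one : ∀ t, y t ≤ 1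
  degree : ∀ t : T, ∑ v : T ⊕ D, x (Sum.inl t) v = 2 * y t
  depot_degree : ∀ d : D, ∑ v : T ⊕ D, x (Sum.inr d) v ≤ 2
  connected : ∀ t : T, y t = 1 →
    ∃ d : D, Relation.ReflTransGen (fun u v => 0 < x u v) (Sum.inl t) (Sum.inr d)
  one_depot_per_cycle : ∀ d d' : D, d ≠ d' →
    ¬ Relation.ReflTransGen (fun u v => 0 < x u v) (Sum.inr d) (Sum.inr d')
  covers : ∀ C ∈ clusters, ∃ t ∈ C, y t = 1

/-- `x(δ(S))`: total multiplicity of solution edges crossing the cut `(S, V∖S)`,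
for a set `S` of targets. -/
def cutS {T D : Type*} [Fintype T] [DecidableEq T] [Fintype D]
    {clusters : Finset (Finset T)} (sol : GMDTSPSol T D clusters)
    (S : Finset T) : ℕ :=
  ∑ a ∈ S, ((∑ b ∈ Sᶜ, sol.x (Sum.inl a) (Sum.inl b)) +
    ∑ d : D, sol.x (Sum.inl a) (Sum.inr d))

private lemma even_sym_sum {α : Type*} [DecidableEq α] (x : α → α → ℕ)
    (hsymm : ∀ a b, x a b = x b a) (hloop : ∀ a, x a a = 0) (S : Finset α) :
    2 ∣ ∑ a ∈ S, ∑ b ∈ S, x a b := by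
  induction S using Finset.induction_on with
  | empty => simp
  | @insert c S hc ih =>
    rw [Finset.sum_insert hc, Finset.sum_insert hc]
    have h1 : ∀ a ∈ S, ∑ b ∈ insert c S, x a b = x a c + ∑ b ∈ S, x a b :=
      fun a _ => Finset.sum_insert hc
    rw [Finset.sum_congr rfl h1, Finset.sum_add_distrib]
    have h2 : ∑ a ∈ S, x a c = ∑ b ∈ S, x c b :=
      Finset.sum_congr rfl fun a _ => hsymm a c
    rw [hloop c, h2]
    omega

private def cycV {T D : Type*} (d0 : D) (k : ℕ) (g : Fin k → T) (j : Fin (k+1)) : T ⊕ D :=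
  if h : (j : ℕ) < k then Sum.inl (g ⟨j, h⟩) else Sum.inr d0

private def cycNxt (k : ℕ) (j : Fin (k+1)) : Fin (k+1) :=
  if h : (j : ℕ) + 1 < k + 1 then ⟨(j : ℕ) + 1, h⟩ else ⟨0, Nat.succ_pos k⟩

private noncomputable def cycX {T D : Type*} [Fintype T] [Fintype D]
    (d0 : D) (k : ℕ) (g : Fin k → T) (u w : T ⊕ D) : ℕ :=
  letI := Classical.dec
  (Finset.univ.filter fun j : Fin (k+1) =>
    (cycV d0 k g j = u ∧ cycV d0 k g (cycNxt k j) = w) ∨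
    (cycV d0 k g j = w ∧ cycV d0 k g (cycNxt k j) = u)).card

private lemma cycle_sol {T D : Type*} [Fintype T] [DecidableEq T] [Fintype D]
    (clusters : Finset (Finset T)) (d0 : D) (k : ℕ) (hk : 0 < k)
    (g : Fin k → T) (hg : Function.Injective g)
    (hcov : ∀ C ∈ clusters, ∃ j, g j ∈ C) :
    ∃ sol : GMDTSPSol T D clusters,
      (∀ t : T, sol.y t = if t ∈ Finset.image g Finset.univ then 1 else 0) ∧
      (∀ (a : T) (w : T ⊕ D), a ∉ Finset.image g Finset.univ →
        sol.x (Sum.inl a) w = 0) := by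
  classical
  set v := cycV d0 k g with hvdef
  set nxt := cycNxt k with hnxtdef
  set X := cycX (T := T) d0 k g with hXdef
  -- basic facts about v
  have hv_lt : ∀ (j : Fin (k+1)) (h : (j : ℕ) < k), v j = Sum.inl (g ⟨j, h⟩) := by
    intro j h; simp [hvdef, cycV, h]
  have hv_last : ∀ (j : Fin (k+1)), ¬ (j : ℕ) < k → v j = Sum.inr d0 := by
    intro j h; simp [hvdef, cycV, h]
  have hv_inl : ∀ (j : Fin (k+1)) (t : T), v j = Sum.inl t →
      ∃ h : (j : ℕ) < k, g ⟨j, h⟩ = t := by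
    intro j t h
    by_cases hj : (j : ℕ) < k
    · rw [hv_lt j hj] at h
      exact ⟨hj, Sum.inl.inj h⟩
    · rw [hv_last j hj] at h; exact absurd h (by simp)
  have hv_inr : ∀ (j : Fin (k+1)) (d : D), v j = Sum.inr d →
      d = d0 ∧ (j : ℕ) = k := by
    intro j d h
    by_cases hj : (j : ℕ) < k
    · rw [hv_lt j hj] at h; exact absurd h (by simp)
    · rw [hv_last j hj] at h
      have := j.isLt
      exact ⟨(Sum.inr.inj h).symm, by omega⟩
  have hvinj : Function.Injective v := by
    intro a b hab
    by_cases ha : (a : ℕ) < k <;> by_cases hb : (b : ℕ) < k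
    · rw [hv_lt a ha, hv_lt b hb] at hab
      have h2 := congrArg Fin.val (hg (Sum.inl.inj hab))
      exact Fin.ext h2
    · rw [hv_lt a ha, hv_last b hb] at hab; exact absurd hab (by simp)
    · rw [hv_last a ha, hv_lt b hb] at hab; exact absurd hab (by simp)
    · have := a.isLt; have := b.isLt; exact Fin.ext (by omega)
  have hnxt_val : ∀ (j : Fin (k+1)), (j : ℕ) < k → (nxt j : ℕ) = (j : ℕ) + 1 := by
    intro j h; simp [hnxtdef, cycNxt, Nat.succ_lt_succ h]
  have hnxt_last : ∀ (j : Fin (k+1)), (j : ℕ) = k → nxt j = ⟨0, Nat.succ_pos k⟩ := by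
    intro j h; simp [hnxtdef, cycNxt, h]
  have hnxt_inj : Function.Injective nxt := by
    intro a b hab
    have ha := a.isLt; have hb := b.isLt
    simp only [hnxtdef, cycNxt] at hab
    apply Fin.ext
    split_ifs at hab with h1 h2 h2 <;>
      · simp only [Fin.mk.injEq] at hab
        omega
  have hnxt_surj : Function.Surjective nxt :=
    Finite.surjective_of_injective hnxt_inj
  have hne : ∀ j, v j ≠ v (nxt j) := by
    intro j h
    have := hvinj h
    by_cases hj : (j : ℕ) < k
    · have := hnxt_val j hj
      have := congrArg Fin.val ‹j = nxt j›
      omega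
    · have hjk : (j : ℕ) = k := by have := j.isLt; omega
      have := hnxt_last j hjk
      rw [this] at ‹j = nxt j›
      have := congrArg Fin.val ‹j = (⟨0, Nat.succ_pos k⟩ : Fin (k+1))›
      simp at this
      have h0 : ((0 : Fin (k+1)) : ℕ) = 0 := rfl
      omega
  -- counting
  have hcnt_le : ∀ u : T ⊕ D, (Finset.univ.filter fun j : Fin (k+1) => v j = u).card ≤ 1 := by
    intro u
    apply Finset.card_le_one.mpr
    intro a ha b hb
    simp only [Finset.mem_filter] at ha hb
    exact hvinj (ha.2.trans hb.2.symm)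
  have hcnt'_eq : ∀ u : T ⊕ D,
      (Finset.univ.filter fun j : Fin (k+1) => v (nxt j) = u).card
        = (Finset.univ.filter fun j : Fin (k+1) => v j = u).card := by
    intro u
    apply Finset.card_bij (fun j _ => nxt j)
    · intro a ha; simp only [Finset.mem_filter] at ha ⊢; exact ⟨Finset.mem_univ _, ha.2⟩
    · intro a _ b _ h; exact hnxt_inj h
    · intro b hb
      obtain ⟨a, rfl⟩ := hnxt_surj b
      simp only [Finset.mem_filter] at hb
      exact ⟨a, by simp [hb.2], rfl⟩
  -- splitting X into the two directed counts
  have hsplit : ∀ u w : T ⊕ D, X u w =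
      (Finset.univ.filter fun j : Fin (k+1) => v j = u ∧ v (nxt j) = w).card +
      (Finset.univ.filter fun j : Fin (k+1) => v j = w ∧ v (nxt j) = u).card := by
    intro u w
    have hdisjf : Disjoint
        (Finset.univ.filter fun j : Fin (k+1) => v j = u ∧ v (nxt j) = w)
        (Finset.univ.filter fun j : Fin (k+1) => v j = w ∧ v (nxt j) = u) := by
      rw [Finset.disjoint_filter]
      rintro j _ ⟨h1, h2⟩ ⟨h3, h4⟩
      exact hne j (h1.trans h4.symm)
    rw [hXdef]
    unfold cycX
    rw [← hvdef, ← hnxtdef, ← Finset.card_union_of_disjoint hdisjf]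
    apply congrArg Finset.card
    ext j
    simp only [Finset.mem_filter, Finset.mem_union, Finset.mem_univ, true_and]
  have hsymmX : ∀ u w, X u w = X w u := by
    intro u w
    rw [hsplit, hsplit]
    omega
  have hA_le : ∀ u w : T ⊕ D,
      (Finset.univ.filter fun j : Fin (k+1) => v j = u ∧ v (nxt j) = w).card ≤
      (Finset.univ.filter fun j : Fin (k+1) => v j = u).card := by
    intro u w
    apply Finset.card_le_card
    intro j hj
    simp only [Finset.mem_filter] at hj ⊢
    exact ⟨hj.1, hj.2.1⟩
  have hB_le : ∀ u w : T ⊕ D,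
      (Finset.univ.filter fun j : Fin (k+1) => v j = w ∧ v (nxt j) = u).card ≤
      (Finset.univ.filter fun j : Fin (k+1) => v (nxt j) = u).card := by
    intro u w
    apply Finset.card_le_card
    intro j hj
    simp only [Finset.mem_filter] at hj ⊢
    exact ⟨hj.1, hj.2.2⟩
  have hX_le_two : ∀ u w, X u w ≤ 2 := by
    intro u w
    have := hA_le u w
    have := hB_le u w
    have := hcnt'_eq u
    have := hcnt_le u
    rw [hsplit]
    omega
  -- degree
  have hdeg : ∀ u : T ⊕ D, ∑ w : T ⊕ D, X u w =
      2 * (Finset.univ.filter fun j : Fin (k+1) => v j = u).card := by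
    intro u
    have h2 : ∑ w : T ⊕ D,
        (Finset.univ.filter fun j : Fin (k+1) => v j = u ∧ v (nxt j) = w).card
        = (Finset.univ.filter fun j : Fin (k+1) => v j = u).card := by
      simp_rw [Finset.card_filter]
      rw [Finset.sum_comm]
      apply Finset.sum_congr rfl
      intro j _
      by_cases h : v j = u
      · simp [h, Finset.sum_ite_eq]
      · simp [h]
    have h3 : ∑ w : T ⊕ D,
        (Finset.univ.filter fun j : Fin (k+1) => v j = w ∧ v (nxt j) = u).card
        = (Finset.univ.filter fun j : Fin (k+1) => v (nxt j) = u).card := by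
      simp_rw [Finset.card_filter]
      rw [Finset.sum_comm]
      apply Finset.sum_congr rfl
      intro j _
      by_cases h : v (nxt j) = u
      · simp [h, Finset.sum_ite_eq]
      · simp [h]
    calc ∑ w : T ⊕ D, X u w
        = ∑ w : T ⊕ D,
          ((Finset.univ.filter fun j : Fin (k+1) => v j = u ∧ v (nxt j) = w).card +
           (Finset.univ.filter fun j : Fin (k+1) => v j = w ∧ v (nxt j) = u).card) :=
          Finset.sum_congr rfl fun w _ => hsplit u w
      _ = _ := by rw [Finset.sum_add_distrib, h2, h3, hcnt'_eq]; omega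
  have hX_zero : ∀ u w : T ⊕ D, (∀ j, v j ≠ u) → X u w = 0 := by
    intro u w h
    rw [hsplit]
    have e1 : (Finset.univ.filter fun j : Fin (k+1) => v j = u ∧ v (nxt j) = w) = ∅ := by
      apply Finset.filter_eq_empty_iff.mpr
      intro j _ hj
      exact h j hj.1
    have e2 : (Finset.univ.filter fun j : Fin (k+1) => v j = w ∧ v (nxt j) = u) = ∅ := by
      apply Finset.filter_eq_empty_iff.mpr
      intro j _ hj
      exact h (nxt j) hj.2
    rw [e1, e2]
    simp
  -- values of the vertex-count at targets
  have hvj : ∀ jj : Fin k, v ⟨(jj : ℕ), Nat.lt_succ_of_lt jj.isLt⟩ = Sum.inl (g jj) := by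
    intro jj
    rw [hv_lt _ jj.isLt]
  have hcnt_inl : ∀ t : T, (Finset.univ.filter fun j : Fin (k+1) => v j = Sum.inl t).card
      = (if t ∈ Finset.image g Finset.univ then 1 else 0) := by
    intro t
    by_cases ht : t ∈ Finset.image g Finset.univ
    · rw [if_pos ht]
      obtain ⟨jj, -, rfl⟩ := Finset.mem_image.mp ht
      have hmem : (⟨(jj : ℕ), Nat.lt_succ_of_lt jj.isLt⟩ : Fin (k+1)) ∈
          Finset.univ.filter fun j : Fin (k+1) => v j = Sum.inl (g jj) := by
        simp only [Finset.mem_filter, Finset.mem_univ, true_and]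
        exact hvj jj
      have h1 := Finset.card_pos.mpr ⟨_, hmem⟩
      have h2 := hcnt_le (Sum.inl (g jj))
      omega
    · rw [if_neg ht, Finset.card_eq_zero]
      apply Finset.filter_eq_empty_iff.mpr
      intro j _ hj
      obtain ⟨h, rfl⟩ := hv_inl j t hj
      exact ht (Finset.mem_image.mpr ⟨_, Finset.mem_univ _, rfl⟩)
  -- no two distinct targets on one edge twice
  have hTT : ∀ t t' : T, X (Sum.inl t) (Sum.inl t') ≤ 1 := by
    intro t t'
    rw [hsplit]
    by_contra hcon
    push_neg at hcon
    have hA := hA_le (Sum.inl t) (Sum.inl t')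
    have hB := hB_le (Sum.inl t) (Sum.inl t')
    have hc1 := hcnt_le (Sum.inl t)
    have hc2 := hcnt'_eq (Sum.inl t)
    have hApos : 0 < (Finset.univ.filter fun j : Fin (k+1) =>
        v j = Sum.inl t ∧ v (nxt j) = Sum.inl t').card := by omega
    have hBpos : 0 < (Finset.univ.filter fun j : Fin (k+1) =>
        v j = Sum.inl t' ∧ v (nxt j) = Sum.inl t).card := by omega
    obtain ⟨j, hj⟩ := Finset.card_pos.mp hApos
    obtain ⟨j', hj'⟩ := Finset.card_pos.mp hBpos
    simp only [Finset.mem_filter, Finset.mem_univ, true_and] at hj hj'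
    obtain ⟨hjk, -⟩ := hv_inl j t hj.1
    obtain ⟨hj'k, -⟩ := hv_inl j' t' hj'.1
    have h1 : nxt j = j' := hvinj (hj.2.trans hj'.1.symm)
    have h2 : nxt j' = j := hvinj (hj'.2.trans hj.1.symm)
    have h3 := hnxt_val j hjk
    have h4 := hnxt_val j' hj'k
    have h5 := congrArg Fin.val h1
    have h6 := congrArg Fin.val h2
    omega
  have hDD : ∀ d d' : D, X (Sum.inr d) (Sum.inr d') = 0 := by
    have e : ∀ (j : Fin (k+1)) (c c' : D), ¬ (v j = Sum.inr c ∧ v (nxt j) = Sum.inr c') := by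
      rintro j c c' ⟨h1, h2⟩
      obtain ⟨-, hj⟩ := hv_inr j c h1
      obtain ⟨-, hnj⟩ := hv_inr (nxt j) c' h2
      rw [hnxt_last j hj] at hnj
      simp at hnj
      omega
    intro d d'
    rw [hsplit]
    have e1 : (Finset.univ.filter fun j : Fin (k+1) =>
        v j = Sum.inr d ∧ v (nxt j) = Sum.inr d') = ∅ :=
      Finset.filter_eq_empty_iff.mpr fun j _ => e j d d'
    have e2 : (Finset.univ.filter fun j : Fin (k+1) =>
        v j = Sum.inr d' ∧ v (nxt j) = Sum.inr d) = ∅ :=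
      Finset.filter_eq_empty_iff.mpr fun j _ => e j d' d
    rw [e1, e2]
    simp
  have hstep : ∀ j : Fin (k+1), 0 < X (v j) (v (nxt j)) := by
    intro j
    rw [hsplit]
    have hmem : j ∈ Finset.univ.filter fun j' : Fin (k+1) =>
        v j' = v j ∧ v (nxt j') = v (nxt j) := by
      simp
    have := Finset.card_pos.mpr ⟨j, hmem⟩
    omega
  have hreach : ∀ (m : ℕ) (j : Fin (k+1)), k - (j : ℕ) = m →
      Relation.ReflTransGen (fun u w => 0 < X u w) (v j) (Sum.inr d0) := by
    intro m
    induction m with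
    | zero =>
      intro j hj
      have hjk : ¬ (j : ℕ) < k := by omega
      rw [hv_last j hjk]
    | succ m ih =>
      intro j hj
      have hjk : (j : ℕ) < k := by omega
      have h1 := hnxt_val j hjk
      exact Relation.ReflTransGen.head (hstep j) (ih (nxt j) (by omega))
  have hrange : ∀ u w : T ⊕ D, 0 < X u w → ∃ j, v j = u := by
    intro u w h
    by_contra hno
    push_neg at hno
    rw [hX_zero u w hno] at h
    exact Nat.lt_irrefl 0 h
  refine ⟨⟨X, fun t => if t ∈ Finset.image g Finset.univ then 1 else 0,
      hsymmX, ?_, hDD, hTT, ?_, ?_, ?_, ?_, ?_, ?_, ?_⟩, ?_, ?_⟩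
  · -- loopless
    intro u
    rw [hsplit]
    have e1 : (Finset.univ.filter fun j : Fin (k+1) =>
        v j = u ∧ v (nxt j) = u) = ∅ :=
      Finset.filter_eq_empty_iff.mpr fun j _ h => hne j (h.1.trans h.2.symm)
    rw [e1]
    simp
  · -- xDT_le_two
    intro d t
    exact hX_le_two _ _
  · -- y_le_one
    intro t
    by_cases h : t ∈ Finset.image g Finset.univ <;> simp [h]
  · -- degree
    intro t
    rw [hdeg (Sum.inl t), hcnt_inl t]
  · -- depot_degree
    intro d
    rw [hdeg (Sum.inr d)]
    have := hcnt_le (Sum.inr d)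
    omega
  · -- connected
    intro t ht
    have htm : t ∈ Finset.image g Finset.univ := by
      by_contra h
      simp only [if_neg h] at ht
      exact absurd ht (by decide)
    obtain ⟨jj, -, rfl⟩ := Finset.mem_image.mp htm
    refine ⟨d0, ?_⟩
    rw [← hvj jj]
    exact hreach _ _ rfl
  · -- one_depot_per_cycle
    intro d d' hdd hpath
    by_cases hd : d = d0
    · subst hd
      rcases Relation.ReflTransGen.cases_tail hpath with heq | ⟨c, -, hstepc⟩
      · exact hdd (Sum.inr.inj heq).symm
      · rw [hsymmX] at hstepc
        obtain ⟨j, hj⟩ := hrange _ _ hstepc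
        exact hdd (hv_inr j d' hj).1.symm
    · rcases Relation.ReflTransGen.cases_head hpath with heq | ⟨c, hstepc, -⟩
      · exact hdd (Sum.inr.inj heq)
      · obtain ⟨j, hj⟩ := hrange _ _ hstepc
        exact hd (hv_inr j d hj).1
  · -- covers
    intro C hC
    obtain ⟨j, hjC⟩ := hcov C hC
    exact ⟨g j, hjC,
      if_pos (Finset.mem_image.mpr ⟨j, Finset.mem_univ j, rfl⟩)⟩
  · -- y formula
    intro t
    rfl
  · -- x vanishes off the cycle
    intro a w ha
    apply hX_zero
    intro j hj
    obtain ⟨h, rfl⟩ := hv_inl j a hj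
    exact ha (Finset.mem_image.mpr ⟨_, Finset.mem_univ _, rfl⟩)

/-- For `S ⊆ T` with `μ(S) = 0` (no cluster entirely
contained in `S`) and `i ∈ S`, the lifted GSEC `x(δ(S)) ≥ 2·y_i` is valid for
every feasible GMDTSP solution, and the lifting coefficient is exact: there is
a feasible solution with `y_i = 0` and `x(δ(S)) = 0`, namely one visiting no
target of `S` (which exists because every cluster has a representative outside
`S`). -/
theorem gsec_lifting_exact {T D : Type*} [Fintype T] [DecidableEq T]
    [Fintype D] [Nonempty D] (clusters : Finset (Finset T))
    (hcover : ∀ t : T, ∃ C ∈ clusters, t ∈ C)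
    (hdisj : ∀ C ∈ clusters, ∀ C' ∈ clusters, C ≠ C' → Disjoint C C')
    (hnonempty : ∀ C ∈ clusters, C.Nonempty)
    (S : Finset T) (i : T) (hi : i ∈ S)
    (hmu : ∀ C ∈ clusters, ¬ C ⊆ S) :
    (∀ sol : GMDTSPSol T D clusters, 2 * sol.y i ≤ cutS sol S) ∧
      ∃ sol : GMDTSPSol T D clusters,
        sol.y i = 0 ∧ cutS sol S = 0 ∧ ∀ t ∈ S, sol.y t = 0 := by
  classical
  constructor
  · -- validity
    intro sol
    rcases Nat.eq_zero_or_pos (sol.y i) with h0 | hpos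
    · simp [h0]
    · have hy1 : sol.y i = 1 := le_antisymm (sol.y_le_one i) hpos
      have hkey : 2 * ∑ a ∈ S, sol.y a =
          (∑ a ∈ S, ∑ b ∈ S, sol.x (Sum.inl a) (Sum.inl b)) + cutS sol S := by
        rw [Finset.mul_sum]
        unfold cutS
        rw [← Finset.sum_add_distrib]
        apply Finset.sum_congr rfl
        intro a _
        rw [← sol.degree a, Fintype.sum_sum_type]
        rw [← Finset.sum_add_sum_compl S (fun b => sol.x (Sum.inl a) (Sum.inl b))]
        ring
      have heven := even_sym_sum (fun a b => sol.x (Sum.inl a) (Sum.inl b))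
        (fun a b => sol.symm _ _) (fun a => sol.loopless _) S
      have hnz : cutS sol S ≠ 0 := by
        intro hcut0
        have hterm : ∀ a ∈ S,
            (∑ b ∈ Sᶜ, sol.x (Sum.inl a) (Sum.inl b)) +
              ∑ d : D, sol.x (Sum.inl a) (Sum.inr d) = 0 :=
          Finset.sum_eq_zero_iff.mp hcut0
        have hxz : ∀ a ∈ S, (∀ b ∈ Sᶜ, sol.x (Sum.inl a) (Sum.inl b) = 0) ∧
            ∀ d : D, sol.x (Sum.inl a) (Sum.inr d) = 0 := by
          intro a ha
          have h1 := hterm a ha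
          have h2 : ∑ b ∈ Sᶜ, sol.x (Sum.inl a) (Sum.inl b) = 0 := by omega
          have h3 : ∑ d : D, sol.x (Sum.inl a) (Sum.inr d) = 0 := by omega
          exact ⟨fun b hb => Finset.sum_eq_zero_iff.mp h2 b hb,
            fun d => Finset.sum_eq_zero_iff.mp h3 d (Finset.mem_univ d)⟩
        obtain ⟨d, hd⟩ := sol.connected i hy1
        have hclaim : ∀ w, Relation.ReflTransGen (fun u v => 0 < sol.x u v)
            (Sum.inl i) w → ∃ a ∈ S, w = Sum.inl a := by
          intro w hw
          induction hw with
          | refl => exact ⟨i, hi, rfl⟩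
          | @tail b c hp hstep ih =>
            obtain ⟨a, haS, rfl⟩ := ih
            cases c with
            | inl t =>
              by_cases htS : t ∈ S
              · exact ⟨t, htS, rfl⟩
              · have := (hxz a haS).1 t (Finset.mem_compl.mpr htS)
                omega
            | inr d' =>
              have := (hxz a haS).2 d'
              omega
        obtain ⟨a, -, ha⟩ := hclaim _ hd
        exact absurd ha (by simp)
      rw [hy1]
      omega
  · -- exactness
    rcases clusters.eq_empty_or_nonempty with hcemp | hcne
    · subst hcemp
      refine ⟨⟨fun _ _ => 0, fun _ => 0, fun _ _ => rfl, fun _ => rfl,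
        fun _ _ => rfl, fun _ _ => Nat.zero_le _, fun _ _ => Nat.zero_le _,
        fun _ => Nat.zero_le _, by simp, by simp, ?_, ?_, by simp⟩, rfl, ?_, fun t _ => rfl⟩
      · intro t ht
        exact (Nat.zero_ne_one ht).elim
      · intro d d' hdd hpath
        rcases Relation.ReflTransGen.cases_head hpath with heq | ⟨c, hstepc, -⟩
        · exact hdd (Sum.inr.inj heq)
        · exact absurd hstepc (by simp)
      · simp [cutS]
    · -- nonempty clusters: build the cycle solution
      have hrepex : ∀ C : Finset T, C ∈ clusters → ∃ t, t ∈ C ∧ t ∉ S := by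
        intro C hC
        obtain ⟨t, htC, htS⟩ := Finset.not_subset.mp (hmu C hC)
        exact ⟨t, htC, htS⟩
      set rep : Finset T → T := fun C =>
        if h : ∃ t, t ∈ C ∧ t ∉ S then h.choose else i with hrepdef
      have hrep : ∀ C ∈ clusters, rep C ∈ C ∧ rep C ∉ S := by
        intro C hC
        have h := hrepex C hC
        simp only [hrepdef, dif_pos h]
        exact h.choose_spec
      set R : Finset T := clusters.image rep with hRdef
      have hRne : R.Nonempty := hcne.image rep
      have hk : 0 < R.card := Finset.card_pos.mpr hRne
      set g : Fin R.card → T := fun j => ((R.equivFin.symm j : R) : T) with hgdef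
      have hg : Function.Injective g := by
        intro a b hab
        exact R.equivFin.symm.injective (Subtype.coe_injective hab)
      have himg : Finset.image g Finset.univ = R := by
        ext t
        constructor
        · intro ht
          obtain ⟨j, -, rfl⟩ := Finset.mem_image.mp ht
          exact (R.equivFin.symm j).2
        · intro ht
          refine Finset.mem_image.mpr ⟨R.equivFin ⟨t, ht⟩, Finset.mem_univ _, ?_⟩
          simp [hgdef]
      have hcov : ∀ C ∈ clusters, ∃ j, g j ∈ C := by
        intro C hC
        have hrC : rep C ∈ R := Finset.mem_image_of_mem rep hC
        rw [← himg] at hrC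
        obtain ⟨j, -, hj⟩ := Finset.mem_image.mp hrC
        exact ⟨j, hj ▸ (hrep C hC).1⟩
      obtain ⟨sol, hy, hx⟩ :=
        cycle_sol (D := D) clusters (Classical.arbitrary D) R.card hk g hg hcov
      have hRS : ∀ t ∈ S, t ∉ R := by
        intro t ht hmem
        obtain ⟨C, hC, hrfl⟩ := Finset.mem_image.mp hmem
        exact (hrep C hC).2 (hrfl ▸ ht)
      have hyS : ∀ t ∈ S, sol.y t = 0 := by
        intro t ht
        rw [hy t, if_neg]
        rw [himg]
        exact hRS t ht
      refine ⟨sol, hyS i hi, ?_, hyS⟩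
      unfold cutS
      apply Finset.sum_eq_zero
      intro a ha
      have hnot : a ∉ Finset.image g Finset.univ := by
        rw [himg]
        exact hRS a ha
      rw [Finset.sum_eq_zero fun b _ => hx a _ hnot,
        Finset.sum_eq_zero fun d _ => hx a _ hnot]
      rfl
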